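/- Let h be a continuous function on ∂₊SM and let h_ψ(x,θ) := h(β₋(x,θ), α₋(x,θ)) be its extension to the interior of SM, constant along lines; assume h_ψ extends to a C¹ function on SM. Suppose: (a) h ∘ 𝒮_A = h, where 𝒮_A(β,α) = (β + π + 2α, −α) is the antipodal scattering relation (so h_ψ is fiberwise even); (b) the extension A₊h of h to ∂SM by h ∘ 𝒮 on the outgoing boundary is fiberwise holomorphic, i.e. for each boundary point e^{iβ} all Fourier coefficients of negative index in the direction angle θ = β+π+α of θ ↦ A₊h vanish; (c) the fiberwise average (h_ψ)₀(x) := (1/2π)∫₀^{2π} h_ψ(x,θ) dθ satisfies ∂̄ (h_ψ)₀ = 0 on the interior of M. Then h_ψ is fiberwise holomorphic: for every interior point x and every integer n > 0, ∫₀^{2π} h_ψ(x,θ) e^{inθ} dθ = 0. -/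

import Mathlib

set_option maxHeartbeats 1600000
set_option synthInstance.maxHeartbeats 800000


open MeasureTheory Set

noncomputable section

/-- The fan-beam angle `α₋(z,θ) ∈ (-π/2, π/2)` of the ingoing point of the line through
`z` with direction `e^{iθ}`: for `z = ρe^{iβ}`, `sin α₋ = -ρ sin(θ-β) = Im(z e^{-iθ})`. -/
def alphaM (z : ℂ) (θ : ℝ) : ℝ :=
  Real.arcsin ((z * Complex.exp (-(Complex.I * θ))).im)

/-- The fan-beam angle `β₋(z,θ)` of the ingoing point, chosen so that
`θ = β₋ + π + α₋` exactly. -/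
def betaM (z : ℂ) (θ : ℝ) : ℝ := θ - Real.pi - alphaM z θ

/-- The extension `h_ψ` of a function `h` on `∂₊SM` to the interior of `SM`,
constant along lines: `h_ψ(z,θ) = h(β₋(z,θ), α₋(z,θ))`. -/
def psiExt (h : ℝ → ℝ → ℂ) (z : ℂ) (θ : ℝ) : ℂ := h (betaM z θ) (alphaM z θ)

lemma alphaM_mem (z : ℂ) (θ : ℝ) : alphaM z θ ∈ Icc (-(Real.pi / 2)) (Real.pi / 2) :=
  Real.arcsin_mem_Icc _

lemma exp_neg_I_add_pi (θ : ℝ) :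
    Complex.exp (-(Complex.I * ((θ : ℝ) + Real.pi : ℝ))) = - Complex.exp (-(Complex.I * θ)) := by
  have : (-(Complex.I * ((θ : ℝ) + Real.pi : ℝ)) : ℂ)
      = -(Complex.I * θ) + Real.pi * Complex.I * (-1) := by push_cast; ring
  rw [this, Complex.exp_add]
  have h2 : Complex.exp ((Real.pi : ℂ) * Complex.I * (-1)) = -1 := by
    rw [show ((Real.pi : ℂ) * Complex.I * (-1)) = -(Real.pi * Complex.I) by ring,
      Complex.exp_neg, Complex.exp_pi_mul_I]
    norm_num
  rw [h2]
  ring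

lemma alphaM_add_pi (z : ℂ) (θ : ℝ) : alphaM z (θ + Real.pi) = - alphaM z θ := by
  unfold alphaM
  rw [exp_neg_I_add_pi, mul_neg, Complex.neg_im, Real.arcsin_neg]

lemma alphaM_add_two_pi (z : ℂ) (θ : ℝ) : alphaM z (θ + 2 * Real.pi) = alphaM z θ := by
  unfold alphaM
  congr 2
  have : (-(Complex.I * ((θ : ℝ) + 2 * Real.pi : ℝ)) : ℂ)
      = -(Complex.I * θ) + (-1 : ℤ) * (2 * Real.pi * Complex.I) := by push_cast; ring
  rw [this, Complex.exp_add, Complex.exp_int_mul_two_pi_mul_I, mul_one]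

lemma psiExt_add_pi {h : ℝ → ℝ → ℂ}
    (hSA : ∀ β α : ℝ, α ∈ Icc (-(Real.pi / 2)) (Real.pi / 2) →
      h (β + Real.pi + 2 * α) (-α) = h β α) (z : ℂ) (θ : ℝ) :
    psiExt h z (θ + Real.pi) = psiExt h z θ := by
  unfold psiExt betaM
  rw [alphaM_add_pi]
  have := hSA (θ - Real.pi - alphaM z θ) (alphaM z θ) (alphaM_mem z θ)
  rw [show θ - Real.pi - alphaM z θ + Real.pi + 2 * alphaM z θ
      = θ + Real.pi - Real.pi - -alphaM z θ by ring] at this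
  exact this

lemma psiExt_add_two_pi {h : ℝ → ℝ → ℂ}
    (hper : ∀ β α : ℝ, h (β + 2 * Real.pi) α = h β α) (z : ℂ) (θ : ℝ) :
    psiExt h z (θ + 2 * Real.pi) = psiExt h z θ := by
  unfold psiExt betaM
  rw [alphaM_add_two_pi]
  rw [show θ + 2 * Real.pi - Real.pi - alphaM z θ
      = (θ - Real.pi - alphaM z θ) + 2 * Real.pi by ring]
  exact hper _ _

lemma alphaM_line (z : ℂ) (t θ : ℝ) :
    alphaM (z + t • Complex.exp (Complex.I * θ)) θ = alphaM z θ := by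
  unfold alphaM
  congr 1
  have : (z + t • Complex.exp (Complex.I * θ)) * Complex.exp (-(Complex.I * θ))
      = z * Complex.exp (-(Complex.I * θ)) + (t : ℂ) := by
    rw [add_mul, Complex.real_smul, mul_assoc, ← Complex.exp_add]
    simp
  rw [this, Complex.add_im, Complex.ofReal_im, add_zero]

lemma psiExt_line (h : ℝ → ℝ → ℂ) (z : ℂ) (t θ : ℝ) :
    psiExt h (z + t • Complex.exp (Complex.I * θ)) θ = psiExt h z θ := by
  unfold psiExt betaM
  rw [alphaM_line]

/-- Fourier coefficient integral of `H` in the fiber variable. -/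
def Fcoef (H : ℂ × ℝ → ℂ) (k : ℕ) (z : ℂ) : ℂ :=
  ∫ θ in (0:ℝ)..(2 * Real.pi), H (z, θ) * Complex.exp (Complex.I * k * θ)

lemma contE (k : ℕ) : Continuous fun θ : ℝ => Complex.exp (Complex.I * k * θ) := by
  fun_prop

lemma norm_expI (k : ℕ) (θ : ℝ) : ‖Complex.exp (Complex.I * k * θ)‖ = 1 := by
  rw [show (Complex.I * k * θ : ℂ) = (k * θ : ℝ) * Complex.I by push_cast; ring]
  exact Complex.norm_exp_ofReal_mul_I _

lemma Fprime_cont {H : ℂ × ℝ → ℂ} (hH : ContDiff ℝ 1 H) (k : ℕ) (x₀ : ℂ) :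
    Continuous fun θ : ℝ => Complex.exp (Complex.I * k * θ) •
      ((fderiv ℝ H (x₀, θ)).comp (ContinuousLinearMap.inl ℝ ℂ ℝ)) := by
  refine (contE k).smul ?_
  exact ((hH.continuous_fderiv one_ne_zero).comp
    (continuous_const.prodMk continuous_id)).clm_comp continuous_const

lemma hasFDerivAt_Fcoef {H : ℂ × ℝ → ℂ} (hH : ContDiff ℝ 1 H) (k : ℕ) (x₀ : ℂ) :
    HasFDerivAt (Fcoef H k)
      (∫ θ in (0:ℝ)..(2 * Real.pi), Complex.exp (Complex.I * k * θ) •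
        ((fderiv ℝ H (x₀, θ)).comp (ContinuousLinearMap.inl ℝ ℂ ℝ))) x₀ := by
  obtain ⟨C, hC⟩ : ∃ C, ∀ p ∈ (Metric.closedBall x₀ 1) ×ˢ (uIcc (0:ℝ) (2 * Real.pi)),
      ‖fderiv ℝ H p‖ ≤ C :=
    ((isCompact_closedBall _ _).prod isCompact_uIcc).exists_bound_of_continuousOn
      ((hH.continuous_fderiv one_ne_zero).continuousOn)
  have hC0 : (0:ℝ) ≤ C := le_trans (norm_nonneg _)
    (hC (x₀, 0) ⟨Metric.mem_closedBall_self zero_le_one, left_mem_uIcc⟩)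
  have hinl : ‖(ContinuousLinearMap.inl ℝ ℂ ℝ : ℂ →L[ℝ] ℂ × ℝ)‖ ≤ 1 := by
    refine ContinuousLinearMap.opNorm_le_bound _ zero_le_one fun v => ?_
    simp [Prod.norm_def]
  have key := intervalIntegral.hasFDerivAt_integral_of_dominated_of_fderiv_le
    (μ := volume) (F := fun x θ => H (x, θ) * Complex.exp (Complex.I * k * θ))
    (F' := fun x θ => Complex.exp (Complex.I * k * θ) •
      ((fderiv ℝ H (x, θ)).comp (ContinuousLinearMap.inl ℝ ℂ ℝ)))
    (x₀ := x₀) (a := 0) (b := 2 * Real.pi) (bound := fun _ => C) (Metric.ball_mem_nhds x₀ one_pos)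
    ?_ ?_ ?_ ?_ ?_ ?_
  · exact key
  · refine Filter.Eventually.of_forall fun x => Continuous.aestronglyMeasurable ?_
    exact ((hH.continuous.comp (continuous_const.prodMk continuous_id)).mul (contE k))
  · exact ((hH.continuous.comp (continuous_const.prodMk continuous_id)).mul
      (contE k)).intervalIntegrable _ _
  · exact (Fprime_cont hH k x₀).aestronglyMeasurable
  · refine Filter.Eventually.of_forall fun θ hθ x hx => ?_
    show ‖Complex.exp (Complex.I * k * θ) •
      ((fderiv ℝ H (x, θ)).comp (ContinuousLinearMap.inl ℝ ℂ ℝ))‖ ≤ C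
    refine le_trans (norm_smul_le _ _) ?_
    rw [norm_expI, one_mul]
    calc ‖(fderiv ℝ H (x, θ)).comp (ContinuousLinearMap.inl ℝ ℂ ℝ)‖
        ≤ ‖fderiv ℝ H (x, θ)‖ * ‖(ContinuousLinearMap.inl ℝ ℂ ℝ : ℂ →L[ℝ] ℂ × ℝ)‖ :=
          ContinuousLinearMap.opNorm_comp_le _ _
      _ ≤ C * 1 := by
          refine mul_le_mul (hC (x, θ) ⟨Metric.ball_subset_closedBall hx, ?_⟩) hinl
            (norm_nonneg _) hC0
          have hle : (0:ℝ) ≤ 2 * Real.pi := by positivity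
          have : θ ∈ Set.Ioc (0:ℝ) (2 * Real.pi) := by
            rwa [Set.uIoc_of_le hle] at hθ
          rw [uIcc_of_le hle]
          exact Set.Ioc_subset_Icc_self this
      _ = C := mul_one C
  · exact intervalIntegrable_const
  · refine Filter.Eventually.of_forall fun θ hθ x hx => ?_
    have h1 : HasFDerivAt H (fderiv ℝ H (x, θ)) (x, θ) :=
      (hH.differentiable one_ne_zero (x, θ)).hasFDerivAt
    have h2 : HasFDerivAt (fun y : ℂ => (y, θ)) (ContinuousLinearMap.inl ℝ ℂ ℝ) x :=
      hasFDerivAt_prodMk_left x θ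
    exact (h1.comp x h2).mul_const _

lemma Fcoef_fderiv_apply {H : ℂ × ℝ → ℂ} (hH : ContDiff ℝ 1 H) (k : ℕ) (x₀ v : ℂ) :
    fderiv ℝ (Fcoef H k) x₀ v
      = ∫ θ in (0:ℝ)..(2 * Real.pi),
          (fderiv ℝ H (x₀, θ)) (v, (0:ℝ)) * Complex.exp (Complex.I * k * θ) := by
  rw [(hasFDerivAt_Fcoef hH k x₀).fderiv,
    ContinuousLinearMap.intervalIntegral_apply ((Fprime_cont hH k x₀).intervalIntegrable _ _) v]
  refine intervalIntegral.integral_congr fun θ _ => ?_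
  simp [mul_comm]

lemma hline {h : ℝ → ℝ → ℂ} {H : ℂ × ℝ → ℂ} (hH : ContDiff ℝ 1 H)
    (hHext : ∀ z ∈ Metric.ball (0 : ℂ) 1, ∀ θ : ℝ, H (z, θ) = psiExt h z θ)
    {z : ℂ} (hz : z ∈ Metric.ball (0 : ℂ) 1) (θ : ℝ) :
    fderiv ℝ H (z, θ) (Complex.exp (Complex.I * θ), (0:ℝ)) = 0 := by
  set e : ℂ := Complex.exp (Complex.I * θ) with he
  have hnorm_e : ‖e‖ = 1 := by
    rw [he, show (Complex.I * θ : ℂ) = (θ : ℝ) * Complex.I by ring]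
    exact Complex.norm_exp_ofReal_mul_I _
  have hznorm : ‖z‖ < 1 := by simpa [Metric.mem_ball] using hz
  have hpos : 0 < 1 - ‖z‖ := by linarith
  have hcurve : HasDerivAt (fun t : ℝ => (z + t • e, θ)) (e, (0:ℝ)) 0 := by
    have h1 : HasDerivAt (fun t : ℝ => z + t • e) e 0 := by
      simpa using ((hasDerivAt_id (0:ℝ)).smul_const e).const_add z
    exact h1.prodMk (hasDerivAt_const 0 θ)
  have hf : HasFDerivAt H (fderiv ℝ H (z, θ)) ((fun t : ℝ => (z + t • e, θ)) 0) := by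
    simpa using (hH.differentiable one_ne_zero (z, θ)).hasFDerivAt
  have hcomp : HasDerivAt (fun t : ℝ => H (z + t • e, θ)) ((fderiv ℝ H (z, θ)) (e, 0)) 0 :=
    hf.comp_hasDerivAt 0 hcurve
  have heq : (fun t : ℝ => H (z + t • e, θ)) =ᶠ[nhds (0:ℝ)] fun _ => H (z, θ) := by
    filter_upwards [Metric.ball_mem_nhds (0:ℝ) hpos] with t ht
    have hmem : z + t • e ∈ Metric.ball (0 : ℂ) 1 := by
      rw [Metric.mem_ball, dist_zero_right]
      calc ‖z + t • e‖ ≤ ‖z‖ + ‖t • e‖ := norm_add_le _ _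
        _ = ‖z‖ + |t| := by rw [norm_smul, hnorm_e, mul_one, Real.norm_eq_abs]
        _ < 1 := by
            have : |t| < 1 - ‖z‖ := by simpa [Real.dist_eq] using ht
            linarith
    rw [hHext _ hmem θ, hHext _ hz θ, he, psiExt_line]
  have h0 : HasDerivAt (fun t : ℝ => H (z + t • e, θ)) 0 0 :=
    (hasDerivAt_const (0:ℝ) (H (z, θ))).congr_of_eventuallyEq heq
  exact hcomp.unique h0

lemma exp_I_eq (θ : ℝ) : Complex.exp (Complex.I * θ)
    = (Real.cos θ : ℂ) + (Real.sin θ : ℂ) * Complex.I := by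
  rw [mul_comm, Complex.exp_mul_I, Complex.ofReal_cos, Complex.ofReal_sin]

lemma PQ_rel {h : ℝ → ℝ → ℂ} {H : ℂ × ℝ → ℂ} (hH : ContDiff ℝ 1 H)
    (hHext : ∀ z ∈ Metric.ball (0 : ℂ) 1, ∀ θ : ℝ, H (z, θ) = psiExt h z θ)
    {z : ℂ} (hz : z ∈ Metric.ball (0 : ℂ) 1) (θ : ℝ) :
    (Real.cos θ : ℂ) * (fderiv ℝ H (z, θ)) ((1:ℂ), (0:ℝ))
      + (Real.sin θ : ℂ) * (fderiv ℝ H (z, θ)) (Complex.I, (0:ℝ)) = 0 := by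
  have h0 := hline hH hHext hz θ
  have hvec : (Complex.exp (Complex.I * θ), (0:ℝ))
      = Real.cos θ • ((1:ℂ), (0:ℝ)) + Real.sin θ • (Complex.I, (0:ℝ)) := by
    rw [exp_I_eq θ]
    ext
    · simp [Complex.real_smul]
    · simp
  rw [hvec, map_add, ContinuousLinearMap.map_smul, ContinuousLinearMap.map_smul] at h0
  simpa [Complex.real_smul] using h0

lemma pointwise_cancel (P Q E E2 c s : ℂ) (hrel : c * P + s * Q = 0)
    (hcs : c ^ 2 + s ^ 2 = 1)
    (hE2 : E2 = E * ((c + s * Complex.I) * (c + s * Complex.I))) :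
    P * E2 - Complex.I * (Q * E2) + (P * E + Complex.I * (Q * E)) = 0 := by
  have hI : Complex.I ^ 2 = -1 := Complex.I_sq
  linear_combination (P - Complex.I * Q) * hE2 + (2 * E * (c + s * Complex.I)) * hrel
    + (E * (P * s ^ 2 - 2 * Q * c * s - Q * s ^ 2 * Complex.I)) * hI
    - (E * (P + Q * Complex.I)) * hcs

lemma integrand_cancel {h : ℝ → ℝ → ℂ} {H : ℂ × ℝ → ℂ} (hH : ContDiff ℝ 1 H)
    (hHext : ∀ z ∈ Metric.ball (0 : ℂ) 1, ∀ θ : ℝ, H (z, θ) = psiExt h z θ)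
    {z : ℂ} (hz : z ∈ Metric.ball (0 : ℂ) 1) (k : ℕ) (θ : ℝ) :
    (fderiv ℝ H (z, θ)) ((1:ℂ), (0:ℝ)) * Complex.exp (Complex.I * ((k+2 : ℕ) : ℂ) * θ)
      - Complex.I * ((fderiv ℝ H (z, θ)) (Complex.I, (0:ℝ))
          * Complex.exp (Complex.I * ((k+2 : ℕ) : ℂ) * θ))
      + ((fderiv ℝ H (z, θ)) ((1:ℂ), (0:ℝ)) * Complex.exp (Complex.I * (k : ℂ) * θ)
      + Complex.I * ((fderiv ℝ H (z, θ)) (Complex.I, (0:ℝ))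
          * Complex.exp (Complex.I * (k : ℂ) * θ))) = 0 := by
  have hE2 : Complex.exp (Complex.I * ((k+2 : ℕ) : ℂ) * θ)
      = Complex.exp (Complex.I * (k : ℂ) * θ)
        * (((Real.cos θ : ℂ) + (Real.sin θ : ℂ) * Complex.I)
          * ((Real.cos θ : ℂ) + (Real.sin θ : ℂ) * Complex.I)) := by
    rw [← exp_I_eq θ, ← Complex.exp_add, ← Complex.exp_add]
    congr 1
    push_cast
    ring
  have hcs : (Real.cos θ : ℂ) ^ 2 + (Real.sin θ : ℂ) ^ 2 = 1 := by
    norm_cast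
    exact Real.cos_sq_add_sin_sq θ
  exact pointwise_cancel _ _ _ _ _ _ (PQ_rel hH hHext hz θ) hcs hE2

lemma relation {h : ℝ → ℝ → ℂ} {H : ℂ × ℝ → ℂ} (hH : ContDiff ℝ 1 H)
    (hHext : ∀ z ∈ Metric.ball (0 : ℂ) 1, ∀ θ : ℝ, H (z, θ) = psiExt h z θ)
    {z : ℂ} (hz : z ∈ Metric.ball (0 : ℂ) 1) (k : ℕ) :
    (fderiv ℝ (Fcoef H (k+2)) z 1 - Complex.I * fderiv ℝ (Fcoef H (k+2)) z Complex.I)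
      + (fderiv ℝ (Fcoef H k) z 1 + Complex.I * fderiv ℝ (Fcoef H k) z Complex.I) = 0 := by
  have hPc : Continuous fun θ : ℝ => (fderiv ℝ H (z, θ)) ((1:ℂ), (0:ℝ)) :=
    (((hH.continuous_fderiv one_ne_zero).comp
      (continuous_const.prodMk continuous_id)).clm_apply continuous_const)
  have hQc : Continuous fun θ : ℝ => (fderiv ℝ H (z, θ)) (Complex.I, (0:ℝ)) :=
    (((hH.continuous_fderiv one_ne_zero).comp
      (continuous_const.prodMk continuous_id)).clm_apply continuous_const)
  have hi1 : IntervalIntegrable (fun θ : ℝ => (fderiv ℝ H (z, θ)) ((1:ℂ), (0:ℝ))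
      * Complex.exp (Complex.I * ((k+2 : ℕ) : ℂ) * θ)) volume 0 (2 * Real.pi) :=
    (hPc.mul (contE (k+2))).intervalIntegrable _ _
  have hi2 : IntervalIntegrable (fun θ : ℝ => Complex.I * ((fderiv ℝ H (z, θ)) (Complex.I, (0:ℝ))
      * Complex.exp (Complex.I * ((k+2 : ℕ) : ℂ) * θ))) volume 0 (2 * Real.pi) :=
    (continuous_const.mul (hQc.mul (contE (k+2)))).intervalIntegrable _ _
  have hi3 : IntervalIntegrable (fun θ : ℝ => (fderiv ℝ H (z, θ)) ((1:ℂ), (0:ℝ))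
      * Complex.exp (Complex.I * (k : ℂ) * θ)) volume 0 (2 * Real.pi) :=
    (hPc.mul (contE k)).intervalIntegrable _ _
  have hi4 : IntervalIntegrable (fun θ : ℝ => Complex.I * ((fderiv ℝ H (z, θ)) (Complex.I, (0:ℝ))
      * Complex.exp (Complex.I * (k : ℂ) * θ))) volume 0 (2 * Real.pi) :=
    (continuous_const.mul (hQc.mul (contE k))).intervalIntegrable _ _
  have hzero : (∫ θ in (0:ℝ)..(2 * Real.pi),
      ((fderiv ℝ H (z, θ)) ((1:ℂ), (0:ℝ)) * Complex.exp (Complex.I * ((k+2 : ℕ) : ℂ) * θ)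
      - Complex.I * ((fderiv ℝ H (z, θ)) (Complex.I, (0:ℝ))
          * Complex.exp (Complex.I * ((k+2 : ℕ) : ℂ) * θ))
      + ((fderiv ℝ H (z, θ)) ((1:ℂ), (0:ℝ)) * Complex.exp (Complex.I * (k : ℂ) * θ)
      + Complex.I * ((fderiv ℝ H (z, θ)) (Complex.I, (0:ℝ))
          * Complex.exp (Complex.I * (k : ℂ) * θ))))) = 0 := by
    have hpt := integrand_cancel hH hHext hz k
    simp only [hpt]
    simp
  rw [intervalIntegral.integral_add (hi1.sub hi2) (hi3.add hi4),
    intervalIntegral.integral_sub hi1 hi2, intervalIntegral.integral_add hi3 hi4,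
    intervalIntegral.integral_const_mul, intervalIntegral.integral_const_mul] at hzero
  rw [Fcoef_fderiv_apply hH (k+2) z 1, Fcoef_fderiv_apply hH (k+2) z Complex.I,
    Fcoef_fderiv_apply hH k z 1, Fcoef_fderiv_apply hH k z Complex.I]
  exact hzero

lemma H_eq_psiExt_sphere {h : ℝ → ℝ → ℂ}
    (hcont : ContinuousOn (Function.uncurry h)
      ((univ : Set ℝ) ×ˢ Icc (-(Real.pi / 2)) (Real.pi / 2)))
    {H : ℂ × ℝ → ℂ} (hH : ContDiff ℝ 1 H)
    (hHext : ∀ z ∈ Metric.ball (0 : ℂ) 1, ∀ θ : ℝ, H (z, θ) = psiExt h z θ)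
    {z : ℂ} (hz1 : ‖z‖ = 1) (θ : ℝ) : H (z, θ) = psiExt h z θ := by
  set s : ℝ := (z * Complex.exp (-(Complex.I * θ))).im with hs
  -- the candidate limit point
  set p : ℝ × ℝ := (θ - Real.pi - Real.arcsin s, Real.arcsin s) with hp
  have htend1 : Filter.Tendsto (fun t : ℝ => H (t • z, θ)) (nhdsWithin 1 (Iio 1))
      (nhds (H (z, θ))) := by
    have hcm : Continuous fun t : ℝ => H (t • z, θ) :=
      hH.continuous.comp ((continuous_id.smul continuous_const).prodMk continuous_const)
    have h1 := (hcm.tendsto 1).mono_left (nhdsWithin_le_nhds (s := Iio (1:ℝ)))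
    simpa using h1
  have hψ : Continuous fun t : ℝ =>
      ((θ - Real.pi - Real.arcsin (t * s), Real.arcsin (t * s)) : ℝ × ℝ) := by
    have : Continuous fun t : ℝ => Real.arcsin (t * s) :=
      Real.continuous_arcsin.comp (continuous_id.mul continuous_const)
    exact (continuous_const.sub this).prodMk this
  have hmaps : ∀ t : ℝ, ((θ - Real.pi - Real.arcsin (t * s), Real.arcsin (t * s)) : ℝ × ℝ)
      ∈ (univ : Set ℝ) ×ˢ Icc (-(Real.pi / 2)) (Real.pi / 2) :=
    fun t => ⟨mem_univ _, Real.arcsin_mem_Icc _⟩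
  have hpmem : p ∈ (univ : Set ℝ) ×ˢ Icc (-(Real.pi / 2)) (Real.pi / 2) :=
    ⟨mem_univ _, Real.arcsin_mem_Icc _⟩
  have htend2 : Filter.Tendsto
      (fun t : ℝ => h (θ - Real.pi - Real.arcsin (t * s)) (Real.arcsin (t * s)))
      (nhdsWithin 1 (Iio 1)) (nhds (h p.1 p.2)) := by
    have hψ1 : Filter.Tendsto
        (fun t : ℝ => ((θ - Real.pi - Real.arcsin (t * s), Real.arcsin (t * s)) : ℝ × ℝ))
        (nhds 1) (nhdsWithin p ((univ : Set ℝ) ×ˢ Icc (-(Real.pi / 2)) (Real.pi / 2))) := by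
      rw [tendsto_nhdsWithin_iff]
      constructor
      · have := hψ.tendsto 1
        simpa [hp] using this
      · exact Filter.Eventually.of_forall hmaps
    have hcw := (hcont p hpmem).tendsto
    have := hcw.comp hψ1
    exact (this.mono_left nhdsWithin_le_nhds)
  have hev : (fun t : ℝ => H (t • z, θ))
      =ᶠ[nhdsWithin 1 (Iio 1)]
      (fun t : ℝ => h (θ - Real.pi - Real.arcsin (t * s)) (Real.arcsin (t * s))) := by
    filter_upwards [Ioo_mem_nhdsLT_of_mem (Set.mem_Ioc.mpr ⟨by norm_num, le_refl (1:ℝ)⟩ :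
      (1:ℝ) ∈ Set.Ioc (-1 : ℝ) 1)] with t ht
    have hmem : t • z ∈ Metric.ball (0 : ℂ) 1 := by
      rw [Metric.mem_ball, dist_zero_right, norm_smul, hz1, mul_one, Real.norm_eq_abs]
      exact abs_lt.mpr ⟨ht.1, ht.2⟩
    rw [hHext _ hmem θ]
    unfold psiExt betaM alphaM
    have him : ((t • z) * Complex.exp (-(Complex.I * θ))).im = t * s := by
      rw [smul_mul_assoc, Complex.smul_im, hs]
      rfl
    rw [him]
  have := tendsto_nhds_unique (htend1.congr' hev) htend2
  rw [this]
  rfl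

lemma boundary_int {h : ℝ → ℝ → ℂ}
    (hper : ∀ β α : ℝ, h (β + 2 * Real.pi) α = h β α)
    (hAplus : ∀ β : ℝ, ∀ n : ℕ, 1 ≤ n →
      ∫ α in (-(Real.pi / 2))..(3 * Real.pi / 2),
        (if α ≤ Real.pi / 2 then h β α else h (β + Real.pi + 2 * α) (Real.pi - α)) *
          Complex.exp (Complex.I * n * (β + Real.pi + α)) = 0)
    {z : ℂ} (hz1 : ‖z‖ = 1) (n : ℕ) (hn : 1 ≤ n) :
    ∫ θ in (0:ℝ)..(2 * Real.pi), psiExt h z θ * Complex.exp (Complex.I * n * θ) = 0 := by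
  set β : ℝ := Complex.arg z with hβ
  have hzβ : z = Complex.exp ((β : ℂ) * Complex.I) := by
    have := Complex.norm_mul_exp_arg_mul_I z
    rw [hz1] at this
    simpa using this.symm
  set f : ℝ → ℂ := fun θ => psiExt h z θ * Complex.exp (Complex.I * n * θ) with hf
  have hfper : Function.Periodic f (2 * Real.pi) := by
    intro θ
    rw [hf]
    simp only
    rw [psiExt_add_two_pi hper]
    congr 1
    have harg : (Complex.I * n * ((θ + 2 * Real.pi : ℝ) : ℂ))
        = Complex.I * n * (θ : ℂ) + (n : ℂ) * (2 * Real.pi * Complex.I) := by push_cast; ring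
    rw [harg, Complex.exp_add, Complex.exp_nat_mul_two_pi_mul_I, mul_one]
  have hshift : (∫ θ in (0:ℝ)..(2 * Real.pi), f θ)
      = ∫ θ in (β + Real.pi/2)..(β + Real.pi/2 + 2 * Real.pi), f θ := by
    have := hfper.intervalIntegral_add_eq 0 (β + Real.pi/2)
    simpa using this
  have hsub : (∫ θ in (β + Real.pi/2)..(β + Real.pi/2 + 2 * Real.pi), f θ)
      = ∫ α in (-(Real.pi/2))..(3 * Real.pi/2), f (α + (β + Real.pi)) := by
    rw [intervalIntegral.integral_comp_add_right (fun x => f x) (β + Real.pi)]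
    congr 1 <;> ring
  have hcongr : (∫ α in (-(Real.pi/2))..(3 * Real.pi/2), f (α + (β + Real.pi)))
      = ∫ α in (-(Real.pi/2))..(3 * Real.pi/2),
        (if α ≤ Real.pi / 2 then h β α else h (β + Real.pi + 2 * α) (Real.pi - α)) *
          Complex.exp (Complex.I * n * (β + Real.pi + α)) := by
    refine intervalIntegral.integral_congr fun α hα => ?_
    have hα' : α ∈ Icc (-(Real.pi/2)) (3 * Real.pi/2) := by
      rwa [uIcc_of_le (by linarith [Real.pi_pos] : -(Real.pi/2) ≤ 3 * Real.pi/2)] at hα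
    rw [hf]
    simp only
    have hexp : Complex.exp (Complex.I * n * ((α + (β + Real.pi) : ℝ) : ℂ))
        = Complex.exp (Complex.I * n * ((β : ℂ) + (Real.pi : ℂ) + (α : ℂ))) := by
      congr 1
      push_cast
      ring
    have him : alphaM z (α + (β + Real.pi)) = Real.arcsin (Real.sin (-(α + Real.pi))) := by
      unfold alphaM
      congr 2
      have hzexp : z * Complex.exp (-(Complex.I * ((α + (β + Real.pi) : ℝ) : ℂ)))
          = Complex.exp (((-(α + Real.pi) : ℝ) : ℂ) * Complex.I) := by
        rw [hzβ, ← Complex.exp_add]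
        congr 1
        push_cast
        ring
      rw [hzexp, Complex.exp_ofReal_mul_I_im]
    have hsin : Real.sin (-(α + Real.pi)) = Real.sin α := by
      rw [Real.sin_neg, Real.sin_add_pi, neg_neg]
    by_cases hcase : α ≤ Real.pi / 2
    · have h20 : alphaM z (α + (β + Real.pi)) = α := by
        rw [him, hsin]
        exact Real.arcsin_sin hα'.1 hcase
      unfold psiExt betaM
      rw [h20, if_pos hcase, hexp]
      congr 2
      ring
    · have hsin2 : Real.sin (-(α + Real.pi)) = Real.sin (Real.pi - α) := by
        rw [hsin, Real.sin_pi_sub]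
      have h20 : alphaM z (α + (β + Real.pi)) = Real.pi - α := by
        rw [him, hsin2]
        exact Real.arcsin_sin (by linarith [hα'.2]) (by linarith [not_le.mp hcase])
      unfold psiExt betaM
      rw [h20, if_neg hcase, hexp]
      congr 1
      rw [show α + (β + Real.pi) - Real.pi - (Real.pi - α) = β + 2 * α - Real.pi by ring,
        show β + Real.pi + 2 * α = (β + 2 * α - Real.pi) + 2 * Real.pi by ring, hper]
  rw [hshift, hsub, hcongr]
  exact hAplus β n hn

lemma maxprin (f : ℂ → ℂ) (hdiff : Differentiable ℝ f)
    (hdel : ∀ z ∈ Metric.ball (0:ℂ) 1,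
      fderiv ℝ f z 1 - Complex.I * fderiv ℝ f z Complex.I = 0)
    (hbd : ∀ z : ℂ, ‖z‖ = 1 → f z = 0) : ∀ z : ℂ, ‖z‖ ≤ 1 → f z = 0 := by
  set g : ℂ → ℂ := fun w => (starRingEnd ℂ) (f w) with hg
  have hgdiff : DifferentiableOn ℂ g (Metric.ball (0:ℂ) 1) := by
    intro w hw
    set X : ℂ := fderiv ℝ f w 1 with hX
    set Y : ℂ := fderiv ℝ f w Complex.I with hY
    have hXY : X = Complex.I * Y := by
      have := hdel w hw
      rw [sub_eq_zero] at this
      exact this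
    have hfd : HasFDerivAt f (fderiv ℝ f w) w := (hdiff w).hasFDerivAt
    have hgd : HasFDerivAt g
        ((Complex.conjCLE.toContinuousLinearMap).comp (fderiv ℝ f w)) w :=
      (Complex.conjCLE.toContinuousLinearMap.hasFDerivAt).comp w hfd
    have hM : ((((starRingEnd ℂ) X) • (1 : ℂ →L[ℂ] ℂ)).restrictScalars ℝ)
        = (Complex.conjCLE.toContinuousLinearMap).comp (fderiv ℝ f w) := by
      apply ContinuousLinearMap.ext
      intro v
      have hv : (v.re : ℂ) + (v.im : ℂ) * Complex.I = v := Complex.re_add_im v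
      have hv' : v = v.re • (1:ℂ) + v.im • Complex.I := by
        rw [Complex.real_smul, Complex.real_smul, mul_one]
        exact hv.symm
      simp only [ContinuousLinearMap.coe_restrictScalars', ContinuousLinearMap.smul_apply,
        ContinuousLinearMap.one_apply, ContinuousLinearMap.coe_comp', Function.comp_apply,
        ContinuousLinearEquiv.coe_coe]
      conv_rhs => rw [hv']
      rw [(fderiv ℝ f w).map_add, ContinuousLinearMap.map_smul, ContinuousLinearMap.map_smul,
        ← hX, ← hY, Complex.conjCLE_apply, Complex.real_smul, Complex.real_smul,
        map_add, map_mul, map_mul, Complex.conj_ofReal, Complex.conj_ofReal,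
        smul_eq_mul, hXY, map_mul, Complex.conj_I]
      have hI : Complex.I ^ 2 = -1 := Complex.I_sq
      linear_combination (Complex.I * ((starRingEnd ℂ) Y)) * hv
        - ((v.im : ℂ) * ((starRingEnd ℂ) Y)) * hI
    have hgd' : HasFDerivAt g (((starRingEnd ℂ) X) • (1 : ℂ →L[ℂ] ℂ)) w :=
      hasFDerivAt_of_restrictScalars ℝ hgd hM
    exact hgd'.differentiableAt.differentiableWithinAt
  have hgcont : Continuous g := Complex.continuous_conj.comp hdiff.continuous
  have hdcc : DiffContOnCl ℂ g (Metric.ball (0:ℂ) 1) := ⟨hgdiff, hgcont.continuousOn⟩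
  intro z hznorm
  have hzc : z ∈ closure (Metric.ball (0:ℂ) 1) := by
    rw [closure_ball (0:ℂ) one_ne_zero, Metric.mem_closedBall, dist_zero_right]
    exact hznorm
  have hnorm := Complex.norm_le_of_forall_mem_frontier_norm_le
    (Metric.isBounded_ball (x := (0:ℂ)) (r := 1)) hdcc (C := 0) ?_ hzc
  · have : g z = 0 := norm_le_zero_iff.mp hnorm
    have : (starRingEnd ℂ) (f z) = 0 := this
    simpa using congrArg (starRingEnd ℂ) this
  · intro w hw
    rw [frontier_ball (0:ℂ) one_ne_zero] at hw
    have hw1 : ‖w‖ = 1 := by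
      rw [mem_sphere_iff_norm, sub_zero] at hw
      exact hw
    have : f w = 0 := hbd w hw1
    simp [hg, this]

lemma Fcoef_sphere {h : ℝ → ℝ → ℂ}
    (hcont : ContinuousOn (Function.uncurry h)
      ((univ : Set ℝ) ×ˢ Icc (-(Real.pi / 2)) (Real.pi / 2)))
    (hper : ∀ β α : ℝ, h (β + 2 * Real.pi) α = h β α)
    {H : ℂ × ℝ → ℂ} (hH : ContDiff ℝ 1 H)
    (hHext : ∀ z ∈ Metric.ball (0 : ℂ) 1, ∀ θ : ℝ, H (z, θ) = psiExt h z θ)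
    (hAplus : ∀ β : ℝ, ∀ n : ℕ, 1 ≤ n →
      ∫ α in (-(Real.pi / 2))..(3 * Real.pi / 2),
        (if α ≤ Real.pi / 2 then h β α else h (β + Real.pi + 2 * α) (Real.pi - α)) *
          Complex.exp (Complex.I * n * (β + Real.pi + α)) = 0)
    {z : ℂ} (hz1 : ‖z‖ = 1) (n : ℕ) (hn : 1 ≤ n) : Fcoef H n z = 0 := by
  unfold Fcoef
  rw [intervalIntegral.integral_congr
    (g := fun θ => psiExt h z θ * Complex.exp (Complex.I * n * θ))
    (fun θ _ => by rw [H_eq_psiExt_sphere hcont hH hHext hz1 θ])]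
  exact boundary_int hper hAplus hz1 n hn

/-- Let `h` be continuous on `∂₊SM` (as a `2π`-periodic-in-`β` function
of `(β,α) ∈ ℝ × [-π/2, π/2]`), and suppose its constant-along-lines extension `h_ψ`
extends to a `C¹` function `H` on `SM`. If (a) `h ∘ 𝒮_A = h`; (b) the extension `A₊h`
of `h` to `∂SM` by `h ∘ 𝒮` is fiberwise holomorphic (all Fourier coefficients of
negative index in `θ = β+π+α` vanish); and (c) `∂̄(h_ψ)₀ = 0` on the interior of `M`,
then `h_ψ` is fiberwise holomorphic: `∫₀^{2π} h_ψ(z,θ) e^{inθ} dθ = 0` for all interior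
`z` and all `n > 0`. -/
theorem statement17 (h : ℝ → ℝ → ℂ)
    (hcont : ContinuousOn (Function.uncurry h)
      ((univ : Set ℝ) ×ˢ Icc (-(Real.pi / 2)) (Real.pi / 2)))
    (hper : ∀ β α : ℝ, h (β + 2 * Real.pi) α = h β α)
    (H : ℂ × ℝ → ℂ) (hH : ContDiff ℝ 1 H)
    (hHext : ∀ z ∈ Metric.ball (0 : ℂ) 1, ∀ θ : ℝ, H (z, θ) = psiExt h z θ)
    -- (a) invariance under the antipodal scattering relation
    (hSA : ∀ β α : ℝ, α ∈ Icc (-(Real.pi / 2)) (Real.pi / 2) →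
      h (β + Real.pi + 2 * α) (-α) = h β α)
    -- (b) `A₊h` is fiberwise holomorphic on `∂SM`
    (hAplus : ∀ β : ℝ, ∀ n : ℕ, 1 ≤ n →
      ∫ α in (-(Real.pi / 2))..(3 * Real.pi / 2),
        (if α ≤ Real.pi / 2 then h β α else h (β + Real.pi + 2 * α) (Real.pi - α)) *
          Complex.exp (Complex.I * n * (β + Real.pi + α)) = 0)
    -- (c) the fiberwise average of `h_ψ` is holomorphic on the interior
    (hc : ∀ z ∈ Metric.ball (0 : ℂ) 1,
      fderiv ℝ (fun w : ℂ =>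
          (1 / (2 * (Real.pi : ℂ))) * ∫ θ in (0:ℝ)..(2 * Real.pi), psiExt h w θ) z 1
        + Complex.I * fderiv ℝ (fun w : ℂ =>
          (1 / (2 * (Real.pi : ℂ))) * ∫ θ in (0:ℝ)..(2 * Real.pi), psiExt h w θ) z Complex.I
      = 0) :
    ∀ z ∈ Metric.ball (0 : ℂ) 1, ∀ n : ℕ, 0 < n →
      ∫ θ in (0:ℝ)..(2 * Real.pi),
        psiExt h z θ * Complex.exp (Complex.I * n * θ) = 0 := by
  -- dbar of the zeroth Fourier coefficient vanishes on the ball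
  have hdbar0 : ∀ w ∈ Metric.ball (0:ℂ) 1,
      fderiv ℝ (Fcoef H 0) w 1 + Complex.I * fderiv ℝ (Fcoef H 0) w Complex.I = 0 := by
    intro w hw
    have hev : (fun u : ℂ => (1 / (2 * (Real.pi : ℂ))) *
        ∫ θ in (0:ℝ)..(2 * Real.pi), psiExt h u θ)
        =ᶠ[nhds w] (fun u : ℂ => (1 / (2 * (Real.pi : ℂ))) * Fcoef H 0 u) := by
      filter_upwards [Metric.isOpen_ball.mem_nhds hw] with u hu
      congr 1
      unfold Fcoef
      refine intervalIntegral.integral_congr fun θ _ => ?_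
      rw [hHext u hu θ]
      norm_num
    have hder := hc w hw
    rw [hev.fderiv_eq] at hder
    have hd0 : DifferentiableAt ℝ (Fcoef H 0) w := (hasFDerivAt_Fcoef hH 0 w).differentiableAt
    rw [fderiv_const_mul hd0] at hder
    simp only [ContinuousLinearMap.smul_apply, smul_eq_mul] at hder
    have hπ : ((2:ℂ) * Real.pi) ≠ 0 := by
      simp [Real.pi_ne_zero]
    field_simp at hder
    linear_combination hder
  -- the induction: all even positive coefficients vanish on the closed ball
  have key : ∀ m : ℕ, ∀ w : ℂ, ‖w‖ ≤ 1 → Fcoef H (2*m+2) w = 0 := by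
    intro m
    induction m with
    | zero =>
      refine maxprin _ (fun x => (hasFDerivAt_Fcoef hH (2*0+2) x).differentiableAt) ?_ ?_
      · intro w hw
        have hrel := relation hH hHext hw 0
        rw [hdbar0 w hw, add_zero] at hrel
        simpa using hrel
      · intro w hw1
        exact Fcoef_sphere hcont hper hH hHext hAplus hw1 _ (by norm_num)
    | succ m ih =>
      refine maxprin _ (fun x => (hasFDerivAt_Fcoef hH (2*(m+1)+2) x).differentiableAt) ?_ ?_
      · intro w hw
        have hrel := relation hH hHext hw (2*m+2)
        have hdb : fderiv ℝ (Fcoef H (2*m+2)) w 1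
            + Complex.I * fderiv ℝ (Fcoef H (2*m+2)) w Complex.I = 0 := by
          have hev0 : Fcoef H (2*m+2) =ᶠ[nhds w] (fun _ => (0:ℂ)) := by
            filter_upwards [Metric.isOpen_ball.mem_nhds hw] with u hu
            exact ih u (le_of_lt (mem_ball_zero_iff.mp hu))
          rw [hev0.fderiv_eq, fderiv_fun_const]
          simp
        rw [hdb, add_zero] at hrel
        rw [show 2*(m+1)+2 = (2*m+2)+2 by ring]
        simpa using hrel
      · intro w hw1
        exact Fcoef_sphere hcont hper hH hHext hAplus hw1 _ (by omega)
  intro z hz n hn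
  have hFeq : (∫ θ in (0:ℝ)..(2 * Real.pi), psiExt h z θ * Complex.exp (Complex.I * n * θ))
      = Fcoef H n z := by
    unfold Fcoef
    exact intervalIntegral.integral_congr fun θ _ => by rw [hHext z hz θ]
  rw [hFeq]
  rcases Nat.even_or_odd n with he | ho
  · obtain ⟨m, hm⟩ := he
    have hm1 : 1 ≤ m := by omega
    rw [show n = 2*(m-1)+2 by omega]
    exact key (m-1) z (le_of_lt (mem_ball_zero_iff.mp hz))
  · -- odd coefficients vanish by evenness of `psiExt` in the fiber
    have hHper : ∀ θ : ℝ, H (z, θ + Real.pi) = H (z, θ) := fun θ => by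
      rw [hHext z hz, hHext z hz, psiExt_add_pi hSA]
    have hcontf : Continuous fun θ : ℝ => H (z, θ) * Complex.exp (Complex.I * n * θ) :=
      (hH.continuous.comp (continuous_const.prodMk continuous_id)).mul (contE n)
    have hint1 : IntervalIntegrable (fun θ : ℝ => H (z, θ) * Complex.exp (Complex.I * n * θ))
        volume 0 Real.pi := hcontf.intervalIntegrable _ _
    have hint2 : IntervalIntegrable (fun θ : ℝ => H (z, θ) * Complex.exp (Complex.I * n * θ))
        volume Real.pi (2 * Real.pi) := hcontf.intervalIntegrable _ _
    have hexpπ : ∀ θ : ℝ, Complex.exp (Complex.I * n * ((θ + Real.pi : ℝ) : ℂ))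
        = - Complex.exp (Complex.I * n * θ) := by
      intro θ
      have harg : (Complex.I * n * ((θ + Real.pi : ℝ) : ℂ))
          = Complex.I * n * θ + n * ((Real.pi : ℂ) * Complex.I) := by push_cast; ring
      rw [harg, Complex.exp_add, Complex.exp_nat_mul, Complex.exp_pi_mul_I,
        Odd.neg_one_pow ho, mul_neg_one]
    have h2 : (∫ θ in Real.pi..(2 * Real.pi), H (z, θ) * Complex.exp (Complex.I * n * θ))
        = ∫ θ in (0:ℝ)..Real.pi,
            H (z, θ + Real.pi) * Complex.exp (Complex.I * n * ((θ + Real.pi : ℝ) : ℂ)) := by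
      rw [intervalIntegral.integral_comp_add_right
        (fun x => H (z, x) * Complex.exp (Complex.I * n * x)) Real.pi]
      congr 1 <;> ring
    have h3 : (∫ θ in (0:ℝ)..Real.pi,
          H (z, θ + Real.pi) * Complex.exp (Complex.I * n * ((θ + Real.pi : ℝ) : ℂ)))
        = - ∫ θ in (0:ℝ)..Real.pi, H (z, θ) * Complex.exp (Complex.I * n * θ) := by
      rw [← intervalIntegral.integral_neg]
      refine intervalIntegral.integral_congr fun θ _ => ?_
      rw [hHper θ, hexpπ θ]
      ring
    unfold Fcoef
    rw [← intervalIntegral.integral_add_adjacent_intervals hint1 hint2, h2, h3]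
    ring
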